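/- (Additivity Lemma) Let b be an instruction sequence with values in {−1,1}. Let ℓ, ℓ' ≥ 0 and m, d, d' ≥ 1 be integers with ℓ' and d' both even, and let r be such that 2^r > ℓ + m·d. Assume that for each k ≥ 0 the following implication holds: if E_{k,1}(ℓ', d', m) ≠ E_{k,−1}(ℓ', d', m) then b_k = b_{k+r}. Then Δ_b(ℓ, d, m) + Δ_b(ℓ', d', m) = Δ_b(ℓ + 2^r ℓ', d + 2^r d', m) (componentwise equality of vectors of length m). -/

import Mathlib

/-- `ε_{k,β}(ℓ, n)`: the number of positions `i` with `ℓ < i ≤ n` and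
`i ≡ 2^k(2+β) (mod 2^{k+2})`, minus `⌊(n-ℓ)/2^{k+2}⌋` (a value in `{0,1}`).
For `β = b_k`, this counts the "extra" 1's of order `k` in the segment
`f_{ℓ+1} ⋯ f_n` of the paperfolding word `f` associated with `b`. -/
def eps (k : ℕ) (β : ℤ) (ℓ n : ℕ) : ℤ :=
  (((Finset.Ioc ℓ n).filter
      (fun (i : ℕ) => (i : ℤ) ≡ 2 ^ k * (2 + β) [ZMOD (2 ^ (k + 2))])).card : ℤ) -
    ((n - ℓ) / 2 ^ (k + 2) : ℕ)

/-- `Δ_b(ℓ, n) = Σ_{k ≥ 0} ε_{k,b_k}(ℓ, n)` (a finite sum: all but finitely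
many terms vanish). -/
noncomputable def delta (b : ℕ → ℤ) (ℓ n : ℕ) : ℤ := ∑' k : ℕ, eps k (b k) ℓ n

/-! ### Auxiliary machinery -/

/-- The natural representative of `2^k(2+β)` mod `2^{k+2}` for `β = ±1`. -/
def av (β : ℤ) (k : ℕ) : ℕ := if β = 1 then 3 * 2 ^ k else 2 ^ k

lemma av_ge (β : ℤ) (k : ℕ) : 2 ^ k ≤ av β k := by
  have : (0:ℕ) < 2 ^ k := Nat.two_pow_pos k
  unfold av; split <;> omega

lemma av_lt (β : ℤ) (k : ℕ) : av β k < 2 ^ (k + 2) := by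
  have h : (2:ℕ) ^ (k + 2) = 4 * 2 ^ k := by ring
  have : (0:ℕ) < 2 ^ k := Nat.two_pow_pos k
  unfold av; split <;> omega

lemma av_pos (β : ℤ) (k : ℕ) : 0 < av β k :=
  lt_of_lt_of_le (Nat.two_pow_pos k) (av_ge β k)

lemma av_scale (β : ℤ) {r k : ℕ} (h : r ≤ k) : av β k = 2 ^ r * av β (k - r) := by
  have hp : (2:ℕ) ^ r * 2 ^ (k - r) = 2 ^ k := by
    rw [← pow_add]; congr 1; omega
  unfold av; split <;> rw [← hp] <;> ring

lemma mem_iff (k : ℕ) (β : ℤ) (hβ : β = 1 ∨ β = -1) (i : ℕ) :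
    ((i : ℤ) ≡ 2 ^ k * (2 + β) [ZMOD (2 ^ (k + 2))]) ↔ i % 2 ^ (k + 2) = av β k := by
  have hlt := av_lt β k
  have hm : av β k % 2 ^ (k + 2) = av β k := Nat.mod_eq_of_lt hlt
  rcases hβ with h | h <;> subst h <;> unfold av at hm ⊢ <;> norm_num at hm ⊢
  · have h1 : (2:ℤ) ^ k * 3 = ((3 * 2 ^ k : ℕ) : ℤ) := by push_cast; ring
    rw [h1, show ((2:ℤ) ^ (k+2)) = ((2 ^ (k+2) : ℕ) : ℤ) by push_cast; ring,
      Int.natCast_modEq_iff]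
    simp only [Nat.ModEq]
    rw [hm]
  · rw [show (2:ℤ) ^ k = ((2 ^ k : ℕ) : ℤ) by push_cast; ring,
      show ((2:ℤ) ^ (k+2)) = ((2 ^ (k+2) : ℕ) : ℤ) by push_cast; ring,
      Int.natCast_modEq_iff]
    simp only [Nat.ModEq]
    rw [hm]

lemma dvd_iff_mod (a A n : ℕ) (ha : 0 < a) (haA : a < A) :
    A ∣ (n + A - a) ↔ n % A = a := by
  rcases Nat.lt_or_ge n a with h | h
  · constructor
    · intro hdvd
      exfalso
      have h1 : 0 < n + A - a := by omega
      have h2 : n + A - a < A := by omega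
      exact absurd (Nat.le_of_dvd h1 hdvd) (by omega)
    · intro hmod
      exfalso
      have := Nat.mod_le n A
      have : n % A = n := Nat.mod_eq_of_lt (by omega)
      omega
  · have he : n + A - a = (n - a) + A := by omega
    rw [he, Nat.dvd_add_self_right, ← Nat.modEq_iff_dvd' h]
    unfold Nat.ModEq
    rw [Nat.mod_eq_of_lt haA]
    exact comm

lemma count_Ioc_zero (a A : ℕ) (ha : 0 < a) (haA : a < A) (n : ℕ) :
    ((Finset.Ioc 0 n).filter (fun i => i % A = a)).card = (n + A - a) / A := by
  induction n with
  | zero => simp; rw [Nat.div_eq_of_lt (by omega)]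
  | succ n ih =>
    have hins : Finset.Ioc 0 (n + 1) = insert (n + 1) (Finset.Ioc 0 n) := by
      rw [← Finset.Ioc_union_Ioc_eq_Ioc (Nat.zero_le n) (Nat.le_succ n),
        Nat.Ioc_succ_singleton, Finset.union_comm]
      rfl
    rw [hins, Finset.filter_insert]
    have hdvd := dvd_iff_mod a A (n + 1) ha haA
    have hsd : (n + 1 + A - a) / A = (n + A - a) / A + if A ∣ n + 1 + A - a then 1 else 0 := by
      have he : n + 1 + A - a = (n + A - a) + 1 := by omega
      rw [he, Nat.succ_div]
    by_cases hc : (n + 1) % A = a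
    · rw [if_pos hc, Finset.card_insert_of_notMem (by simp), ih, hsd,
        if_pos (hdvd.mpr hc)]
    · rw [if_neg hc, ih, hsd, if_neg (fun hd => hc (hdvd.mp hd))]; omega

lemma count_Ioc (a A : ℕ) (ha : 0 < a) (haA : a < A) {l n : ℕ} (hln : l ≤ n) :
    ((Finset.Ioc l n).filter (fun i => i % A = a)).card =
      (n + A - a) / A - (l + A - a) / A := by
  have hdisj : Disjoint (Finset.Ioc 0 l) (Finset.Ioc l n) := by
    simp only [Finset.disjoint_left, Finset.mem_Ioc]
    intro i h1 h2
    omega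
  have hu : Finset.Ioc 0 l ∪ Finset.Ioc l n = Finset.Ioc 0 n :=
    Finset.Ioc_union_Ioc_eq_Ioc (Nat.zero_le l) hln
  have h1 := count_Ioc_zero a A ha haA n
  have h2 := count_Ioc_zero a A ha haA l
  have h3 : ((Finset.Ioc 0 l).filter (fun i => i % A = a)).card +
      ((Finset.Ioc l n).filter (fun i => i % A = a)).card =
      ((Finset.Ioc 0 n).filter (fun i => i % A = a)).card := by
    rw [← Finset.card_union_of_disjoint (Finset.disjoint_filter_filter hdisj),
      ← Finset.filter_union, hu]
  have hmono : (l + A - a) / A ≤ (n + A - a) / A := Nat.div_le_div_right (by omega)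
  omega

/-- The closed formula for `eps` in terms of natural division. -/
lemma eps_eq (k : ℕ) (β : ℤ) (hβ : β = 1 ∨ β = -1) {l n : ℕ} (hln : l ≤ n) :
    eps k β l n =
      (((n + 2 ^ (k + 2) - av β k) / 2 ^ (k + 2) : ℕ) : ℤ) -
      (((l + 2 ^ (k + 2) - av β k) / 2 ^ (k + 2) : ℕ) : ℤ) -
      (((n - l) / 2 ^ (k + 2) : ℕ) : ℤ) := by
  unfold eps
  have hfe : (Finset.Ioc l n).filter
      (fun (i : ℕ) => (i : ℤ) ≡ 2 ^ k * (2 + β) [ZMOD (2 ^ (k + 2))]) =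
      (Finset.Ioc l n).filter (fun i => i % 2 ^ (k + 2) = av β k) := by
    ext i
    simp only [Finset.mem_filter, mem_iff k β hβ i]
  rw [hfe, count_Ioc (av β k) (2 ^ (k + 2)) (av_pos β k) (av_lt β k) hln]
  have hmono : (l + 2 ^ (k + 2) - av β k) / 2 ^ (k + 2) ≤
      (n + 2 ^ (k + 2) - av β k) / 2 ^ (k + 2) := Nat.div_le_div_right (by omega)
  rw [Nat.cast_sub hmono]

lemma eps_zero_of_big (k : ℕ) (β : ℤ) (hβ : β = 1 ∨ β = -1) {l n : ℕ}
    (hln : l ≤ n) (h : n < 2 ^ k) : eps k β l n = 0 := by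
  have hge := av_ge β k
  have hlt := av_lt β k
  rw [eps_eq k β hβ hln, Nat.div_eq_of_lt (by omega), Nat.div_eq_of_lt (by omega),
    Nat.div_eq_of_lt (by omega)]
  simp

lemma eps_shift (k : ℕ) (β : ℤ) (hβ : β = 1 ∨ β = -1) {L n S T : ℕ}
    (hLn : L ≤ n) (hS : 2 ^ (k + 2) ∣ S) (hT : 2 ^ (k + 2) ∣ T) :
    eps k β (L + S) (n + S + T) = eps k β L n := by
  set A := 2 ^ (k + 2) with hA
  have hApos : 0 < A := Nat.two_pow_pos _
  have hge := av_ge β k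
  have hlt := av_lt β k
  obtain ⟨s, rfl⟩ := hS
  obtain ⟨t, rfl⟩ := hT
  rw [eps_eq k β hβ hLn, eps_eq k β hβ (by omega : L + A * s ≤ n + A * s + A * t)]
  rw [show n + A * s + A * t + A - av β k = (n + A - av β k) + A * (s + t) by
    rw [Nat.mul_add]; omega]
  rw [show L + A * s + A - av β k = (L + A - av β k) + A * s by omega]
  rw [show n + A * s + A * t - (L + A * s) = (n - L) + A * t by omega]
  rw [Nat.add_mul_div_left _ _ hApos, Nat.add_mul_div_left _ _ hApos,
    Nat.add_mul_div_left _ _ hApos]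
  simp only [Nat.cast_add]
  ring

lemma div_scale {u : ℕ} (v w r : ℕ) (hu : u < 2 ^ r) :
    (u + 2 ^ r * v) / (2 ^ r * w) = v / w := by
  have h2 : 0 < (2:ℕ) ^ r := Nat.two_pow_pos _
  rw [← Nat.div_div_eq_div_mul, Nat.add_mul_div_left _ _ h2, Nat.div_eq_of_lt hu,
    Nat.zero_add]

lemma eps_scale (k r : ℕ) (β : ℤ) (hβ : β = 1 ∨ β = -1) (hrk : r ≤ k)
    {L n L' n' : ℕ} (hn : n < 2 ^ r) (hLn : L ≤ n) (hL'n' : L' ≤ n') :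
    eps k β (L + 2 ^ r * L') (n + 2 ^ r * n') = eps (k - r) β L' n' := by
  set A' := 2 ^ (k - r + 2) with hA'
  set a' := av β (k - r) with ha'
  have hka : k + 2 = (k - r + 2) + r := by omega
  have hAA : (2:ℕ) ^ (k + 2) = 2 ^ r * A' := by rw [hka, pow_add]; ring
  have haa : av β k = 2 ^ r * a' := av_scale β hrk
  have ha'lt : a' < A' := av_lt β (k - r)
  have ha'pos : 0 < a' := av_pos β (k - r)
  have hmul1 : 2 ^ r * a' ≤ 2 ^ r * A' := Nat.mul_le_mul_left _ (le_of_lt ha'lt)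
  have hmul2 : 2 ^ r * L' ≤ 2 ^ r * n' := Nat.mul_le_mul_left _ hL'n'
  have hle1 : L + 2 ^ r * L' ≤ n + 2 ^ r * n' := by omega
  rw [eps_eq k β hβ hle1, eps_eq (k - r) β hβ hL'n']
  rw [show n + 2 ^ r * n' + 2 ^ (k + 2) - av β k = n + 2 ^ r * (n' + A' - a') by
    rw [Nat.mul_sub .., Nat.mul_add]; omega]
  rw [show L + 2 ^ r * L' + 2 ^ (k + 2) - av β k = L + 2 ^ r * (L' + A' - a') by
    rw [Nat.mul_sub .., Nat.mul_add]; omega]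
  rw [show n + 2 ^ r * n' - (L + 2 ^ r * L') = (n - L) + 2 ^ r * (n' - L') by
    rw [Nat.mul_sub ..]; omega]
  rw [hAA, div_scale _ _ _ hn, div_scale _ _ _ (by omega : L < 2 ^ r),
    div_scale _ _ _ (by omega : n - L < 2 ^ r)]

/-- Truncation of the `tsum` defining `delta` to a finite range. -/
lemma delta_eq_sum (b : ℕ → ℤ) (hb : ∀ k, b k = 1 ∨ b k = -1) {l n K : ℕ}
    (hln : l ≤ n) (hK : n < 2 ^ K) :
    delta b l n = ∑ k ∈ Finset.range K, eps k (b k) l n := by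
  unfold delta
  refine tsum_eq_sum (fun k hk => ?_)
  have hKk : K ≤ k := by simpa using hk
  exact eps_zero_of_big k (b k) (hb k) hln
    (lt_of_lt_of_le hK (Nat.pow_le_pow_right (by norm_num) hKk))

/-- The Additivity Lemma (Holub). Let `ℓ, ℓ' ≥ 0` and `m, d, d' ≥ 1` with `ℓ'`
and `d'` even, and let `r` satisfy `2^r > ℓ + m·d`. If for each `k ≥ 0` the
implication "`E_{k,1}(ℓ',d',m) ≠ E_{k,-1}(ℓ',d',m)` implies `b_k = b_{k+r}`"
holds, then `Δ_b(ℓ,d,m) + Δ_b(ℓ',d',m) = Δ_b(ℓ + 2^r ℓ', d + 2^r d', m)`,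
componentwise: the `j`-th components of these vectors (for `0 ≤ j < m`) are
the `Δ_b` values of the `j`-th of the `m` consecutive segments of lengths
`d`, `d'`, `d + 2^r d'` respectively. -/
theorem additivity_lemma
    (b : ℕ → ℤ) (hb : ∀ k, b k = 1 ∨ b k = -1)
    (ℓ ℓ' m d d' r : ℕ) (hm : 1 ≤ m) (hd : 1 ≤ d) (hd' : 1 ≤ d')
    (hℓ' : Even ℓ') (hd'e : Even d') (hr : ℓ + m * d < 2 ^ r)
    (hE : ∀ k : ℕ,
      (∃ j < m, eps k 1 (ℓ' + j * d') (ℓ' + (j + 1) * d') ≠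
        eps k (-1) (ℓ' + j * d') (ℓ' + (j + 1) * d')) → b k = b (k + r)) :
    ∀ j < m,
      delta b (ℓ + j * d) (ℓ + (j + 1) * d) +
        delta b (ℓ' + j * d') (ℓ' + (j + 1) * d') =
      delta b (ℓ + 2 ^ r * ℓ' + j * (d + 2 ^ r * d'))
        (ℓ + 2 ^ r * ℓ' + (j + 1) * (d + 2 ^ r * d')) := by
  intro j hj
  have h2d' : 2 ∣ d' := hd'e.two_dvd
  have h2L' : 2 ∣ ℓ' + j * d' := (hℓ'.add (hd'e.mul_left j)).two_dvd
  have hLn : ℓ + j * d ≤ ℓ + (j + 1) * d := by gcongr <;> omega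
  have hn1m : ℓ + (j + 1) * d ≤ ℓ + m * d := by gcongr <;> omega
  have hn1r : ℓ + (j + 1) * d < 2 ^ r := lt_of_le_of_lt hn1m hr
  obtain ⟨M, hBlt⟩ : ∃ M, ℓ' + (j + 1) * d' < 2 ^ M := ⟨_, Nat.lt_two_pow_self⟩
  have hBle : ℓ' + j * d' ≤ ℓ' + (j + 1) * d' := by gcongr <;> omega
  have hn1K : ℓ + (j + 1) * d < 2 ^ (r + M) :=
    lt_of_lt_of_le hn1r (Nat.pow_le_pow_right (by norm_num) (by omega))
  have hCarg1 : ℓ + 2 ^ r * ℓ' + j * (d + 2 ^ r * d') =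
      (ℓ + j * d) + 2 ^ r * (ℓ' + j * d') := by ring
  have hCarg2 : ℓ + 2 ^ r * ℓ' + (j + 1) * (d + 2 ^ r * d') =
      (ℓ + (j + 1) * d) + 2 ^ r * (ℓ' + (j + 1) * d') := by ring
  have hmul : 2 ^ r * (ℓ' + j * d') ≤ 2 ^ r * (ℓ' + (j + 1) * d') :=
    Nat.mul_le_mul_left _ hBle
  have hCle : (ℓ + j * d) + 2 ^ r * (ℓ' + j * d') ≤
      (ℓ + (j + 1) * d) + 2 ^ r * (ℓ' + (j + 1) * d') := by omega
  have hCK : (ℓ + (j + 1) * d) + 2 ^ r * (ℓ' + (j + 1) * d') < 2 ^ (r + M) := by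
    have h1 : (ℓ + (j + 1) * d) + 2 ^ r * (ℓ' + (j + 1) * d') <
        2 ^ r * ((ℓ' + (j + 1) * d') + 1) := by
      conv_rhs => rw [Nat.mul_add, Nat.mul_one]
      omega
    have h2 : 2 ^ r * ((ℓ' + (j + 1) * d') + 1) ≤ 2 ^ r * 2 ^ M :=
      Nat.mul_le_mul_left _ (by omega)
    exact lt_of_lt_of_le h1 (h2.trans_eq (pow_add 2 r M).symm)
  rw [hCarg1, hCarg2]
  rw [delta_eq_sum b hb hLn hn1K, delta_eq_sum b hb hBle hBlt,
    delta_eq_sum b hb hCle hCK]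
  rw [Finset.sum_range_add, Finset.sum_range_add]
  -- the tail of the `A`-sum vanishes
  have e3 : ∑ i ∈ Finset.range M,
      eps (r + i) (b (r + i)) (ℓ + j * d) (ℓ + (j + 1) * d) = 0 := by
    refine Finset.sum_eq_zero (fun i _ => ?_)
    exact eps_zero_of_big (r + i) (b (r + i)) (hb _) hLn
      (lt_of_lt_of_le hn1r (Nat.pow_le_pow_right (by norm_num) (by omega)))
  -- low-order part of the `C`-sum agrees with the `A`-sum
  have e1 : ∑ k ∈ Finset.range r,
      eps k (b k) ((ℓ + j * d) + 2 ^ r * (ℓ' + j * d'))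
        ((ℓ + (j + 1) * d) + 2 ^ r * (ℓ' + (j + 1) * d')) =
      ∑ k ∈ Finset.range r, eps k (b k) (ℓ + j * d) (ℓ + (j + 1) * d) := by
    refine Finset.sum_congr rfl (fun k hk => ?_)
    have hkr : k < r := Finset.mem_range.mp hk
    have hdvd1 : (2:ℕ) ^ (k + 2) ∣ 2 ^ r * (ℓ' + j * d') := by
      refine dvd_trans (pow_dvd_pow 2 (by omega : k + 2 ≤ r + 1)) ?_
      rw [pow_succ]
      exact mul_dvd_mul_left _ h2L'
    have hdvd2 : (2:ℕ) ^ (k + 2) ∣ 2 ^ r * d' := by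
      refine dvd_trans (pow_dvd_pow 2 (by omega : k + 2 ≤ r + 1)) ?_
      rw [pow_succ]
      exact mul_dvd_mul_left _ h2d'
    have harg : (ℓ + (j + 1) * d) + 2 ^ r * (ℓ' + (j + 1) * d') =
        (ℓ + (j + 1) * d) + 2 ^ r * (ℓ' + j * d') + 2 ^ r * d' := by ring
    rw [harg]
    exact eps_shift k (b k) (hb k) hLn hdvd1 hdvd2
  -- high-order part of the `C`-sum agrees with the `B`-sum
  have e2 : ∑ i ∈ Finset.range M,
      eps (r + i) (b (r + i)) ((ℓ + j * d) + 2 ^ r * (ℓ' + j * d'))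
        ((ℓ + (j + 1) * d) + 2 ^ r * (ℓ' + (j + 1) * d')) =
      ∑ i ∈ Finset.range M,
        eps i (b i) (ℓ' + j * d') (ℓ' + (j + 1) * d') := by
    refine Finset.sum_congr rfl (fun i _ => ?_)
    have hsc := eps_scale (r + i) r (b (r + i)) (hb _) (by omega) hn1r hLn hBle
    rw [show r + i - r = i by omega] at hsc
    rw [hsc]
    -- now change the instruction `b (r + i)` into `b i`
    by_cases heq : b i = b (i + r)
    · rw [show r + i = i + r by ring, ← heq]
    · have hne : ∀ j' < m, eps i 1 (ℓ' + j' * d') (ℓ' + (j' + 1) * d') =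
          eps i (-1) (ℓ' + j' * d') (ℓ' + (j' + 1) * d') := by
        by_contra hcon
        push_neg at hcon
        exact heq (hE i hcon)
      have h1 := hne j hj
      rcases hb i with h | h <;> rcases hb (r + i) with h' | h' <;>
        rw [h, h'] <;> simp [h1]
  rw [e3, e1, e2]
  ring
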